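/- Let G be a strongly topological gyrogroup with symmetric neighborhood base 𝒰 at 0, and suppose {U_n : n ∈ ω} ⊆ 𝒰 satisfies U_{n+1} ⊕ U_{n+1} ⊆ U_n for all n. Then there exists a continuous prenorm N on G (i.e., N(0) = 0, N(x ⊕ y) ≤ N(x) + N(y), N(⊖x) = N(x)) such that N(gyr[x,y](z)) = N(z) for all x, y, z ∈ G, and {x ∈ G : N(x) < 1/2ⁿ} ⊆ U_n ⊆ {x ∈ G : N(x) ≤ 2/2ⁿ} for all n ∈ ω. -/

import Mathlib

universe u

/-- A gyrogroup: a set with a binary operation `+`, a (unique) two-sided identity `0`,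
(unique) two-sided inverses `-x`, and gyroautomorphisms `gyr x y` satisfying the
left gyroassociative law and the left loop property. -/
class Gyrogroup (G : Type u) extends Add G, Zero G, Neg G where
  gyr : G → G → G → G
  zero_add : ∀ a : G, 0 + a = a
  add_zero : ∀ a : G, a + 0 = a
  zero_unique : ∀ e : G, (∀ a : G, e + a = a ∧ a + e = a) → e = 0
  neg_add : ∀ a : G, -a + a = 0
  add_neg : ∀ a : G, a + -a = 0
  neg_unique : ∀ a b : G, (b + a = 0 ∧ a + b = 0) → b = -a
  gyr_bijective : ∀ x y : G, Function.Bijective (gyr x y)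
  gyr_add : ∀ x y a b : G, gyr x y (a + b) = gyr x y a + gyr x y b
  add_gyroassoc : ∀ x y z : G, x + (y + z) = x + y + gyr x y z
  gyr_left_loop : ∀ x y : G, gyr (x + y) y = gyr x y

open Gyrogroup

/-- A topological gyrogroup: a gyrogroup with a topology making `+` jointly
continuous and negation continuous. -/
class TopologicalGyrogroup (G : Type u) [TopologicalSpace G] [Gyrogroup G] : Prop where
  continuous_add : Continuous fun p : G × G => p.1 + p.2
  continuous_neg : Continuous fun x : G => -x

/-- `gadd A B = {a + b : a ∈ A, b ∈ B}`. -/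
def gadd {G : Type u} [Gyrogroup G] (A B : Set G) : Set G := Set.image2 (· + ·) A B

/-- `gneg A = {-a : a ∈ A}`. -/
def gneg {G : Type u} [Gyrogroup G] (A : Set G) : Set G := (fun x : G => -x) '' A

/-- A subgyrogroup: a nonempty subset closed under `+` and negation. -/
def IsSubgyrogroup {G : Type u} [Gyrogroup G] (H : Set G) : Prop :=
  H.Nonempty ∧ (∀ x ∈ H, -x ∈ H) ∧ ∀ x ∈ H, ∀ y ∈ H, x + y ∈ H

/-- An L-subgyrogroup: a subgyrogroup with `gyr a h '' H = H` for all `a ∈ G`, `h ∈ H`. -/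
def IsLSubgyrogroup {G : Type u} [Gyrogroup G] (H : Set G) : Prop :=
  IsSubgyrogroup H ∧ ∀ a : G, ∀ h ∈ H, gyr a h '' H = H

namespace BKaux

variable {G : Type u} [Gyrogroup G]

theorem gg_left_cancel (a : G) {b c : G} (h : a + b = a + c) : b = c := by
  have h1 : -a + (a + b) = -a + (a + c) := by rw [h]
  rw [Gyrogroup.add_gyroassoc, Gyrogroup.add_gyroassoc, Gyrogroup.neg_add,
    Gyrogroup.zero_add, Gyrogroup.zero_add] at h1
  exact (Gyrogroup.gyr_bijective (-a) a).injective h1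

theorem gg_gyr_zero (x y : G) : gyr x y (0 : G) = 0 := by
  have h := Gyrogroup.gyr_add x y (0 : G) 0
  rw [Gyrogroup.add_zero] at h
  have h2 : gyr x y (0 : G) + gyr x y (0 : G) = gyr x y (0:G) + 0 := by
    rw [Gyrogroup.add_zero]; exact h.symm
  exact gg_left_cancel _ h2

theorem gg_gyr_zero_left (a z : G) : gyr (0 : G) a z = z := by
  have h := Gyrogroup.add_gyroassoc (0 : G) a z
  rw [Gyrogroup.zero_add, Gyrogroup.zero_add] at h
  exact (gg_left_cancel a h).symm

theorem gg_gyr_neg_id (a z : G) : gyr (-a) a z = z := by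
  have h := Gyrogroup.gyr_left_loop (-a) a
  rw [Gyrogroup.neg_add] at h
  rw [← h]
  exact gg_gyr_zero_left a z

theorem gg_neg_add_cancel_left (a b : G) : -a + (a + b) = b := by
  rw [Gyrogroup.add_gyroassoc, Gyrogroup.neg_add, Gyrogroup.zero_add, gg_gyr_neg_id]

theorem gg_neg_neg (a : G) : -(-a) = a :=
  (Gyrogroup.neg_unique (-a) a ⟨Gyrogroup.add_neg a, Gyrogroup.neg_add a⟩).symm

theorem gg_add_neg_cancel_left (a b : G) : a + (-a + b) = b := by
  have h := gg_neg_add_cancel_left (-a) b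
  rwa [gg_neg_neg] at h

theorem gg_eq_neg_of_add_eq_zero {a b : G} (h : a + b = 0) : b = -a := by
  have h2 := gg_neg_add_cancel_left a b
  rw [h, Gyrogroup.add_zero] at h2
  exact h2.symm

theorem gg_decomp (u z : G) : (u + z) + gyr u z (-z) = u := by
  rw [← Gyrogroup.add_gyroassoc, Gyrogroup.add_neg, Gyrogroup.add_zero]

/-- Additivity of a self-map. -/
def Additive' (Φ : G → G) : Prop := ∀ u v : G, Φ (u + v) = Φ u + Φ v

theorem gg_map_zero {Φ : G → G} (hΦ : Additive' Φ) : Φ 0 = 0 := by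
  have h := hΦ 0 0
  rw [Gyrogroup.add_zero] at h
  have h2 : Φ (0:G) + Φ (0:G) = Φ (0:G) + 0 := by rw [Gyrogroup.add_zero]; exact h.symm
  exact gg_left_cancel _ h2

theorem gg_map_neg {Φ : G → G} (hΦ : Additive' Φ) (a : G) : Φ (-a) = -(Φ a) := by
  apply gg_eq_neg_of_add_eq_zero
  rw [← hΦ, Gyrogroup.add_neg, gg_map_zero hΦ]

end BKaux
namespace BKaux

variable {G : Type u} [Gyrogroup G]

theorem mem_gadd {A B : Set G} {a b : G} (ha : a ∈ A) (hb : b ∈ B) : a + b ∈ gadd A B :=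
  Set.mem_image2_of_mem ha hb

theorem gadd_zero_left (A : Set G) : gadd ({0} : Set G) A = A := by
  unfold gadd
  rw [Set.image2_singleton_left]
  have : (fun b : G => 0 + b) = id := by
    funext b; exact Gyrogroup.zero_add b
  rw [this, Set.image_id]

theorem gadd_mono_right {A B B' : Set G} (h : B ⊆ B') : gadd A B ⊆ gadd A B' :=
  Set.image2_subset_left h

theorem image_gadd {Φ : G → G} (hΦ : Additive' Φ) (A B : Set G) :
    Φ '' gadd A B = gadd (Φ '' A) (Φ '' B) :=
  Set.image_image2_distrib hΦ

theorem gadd_assoc_of_inv {A B C : Set G} (hC : ∀ x y : G, gyr x y '' C = C) :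
    gadd (gadd A B) C = gadd A (gadd B C) := by
  apply Set.Subset.antisymm
  · rintro t ⟨ab, hab, c, hc, rfl⟩
    rcases hab with ⟨a, ha, b, hb, rfl⟩
    have hc' : c ∈ gyr a b '' C := by rw [hC a b]; exact hc
    rcases hc' with ⟨c', hc', rfl⟩
    show a + b + gyr a b c' ∈ _
    rw [← Gyrogroup.add_gyroassoc]
    exact mem_gadd ha (mem_gadd hb hc')
  · rintro t ⟨a, ha, bc, hbc, rfl⟩
    rcases hbc with ⟨b, hb, c, hc, rfl⟩
    show a + (b + c) ∈ _
    rw [Gyrogroup.add_gyroassoc]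
    have : gyr a b c ∈ C := by
      rw [← hC a b]; exact Set.mem_image_of_mem _ hc
    exact mem_gadd (mem_gadd ha hb) this

/-- Good maps: additive and preserving each `U n` (both directions). -/
def IsGood (U : ℕ → Set G) (Φ : G → G) : Prop :=
  Additive' Φ ∧ ∀ (n : ℕ) (u : G), Φ u ∈ U n ↔ u ∈ U n

theorem good_id (U : ℕ → Set G) : IsGood U (id : G → G) :=
  ⟨fun _ _ => rfl, fun _ _ => Iff.rfl⟩

theorem good_comp {U : ℕ → Set G} {Φ Ψ : G → G} (hΦ : IsGood U Φ) (hΨ : IsGood U Ψ) :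
    IsGood U (Φ ∘ Ψ) := by
  constructor
  · intro u v
    simp only [Function.comp_apply, hΨ.1 u v]
    exact hΦ.1 _ _
  · intro n u
    simp only [Function.comp_apply, hΦ.2 n, hΨ.2 n]

theorem good_gyr {U : ℕ → Set G} (hgyrU : ∀ (n : ℕ) (x y : G), gyr x y '' (U n) = U n)
    (a b : G) : IsGood U (gyr a b) := by
  refine ⟨Gyrogroup.gyr_add a b, fun n u => ⟨fun h => ?_, fun h => ?_⟩⟩
  · rw [← hgyrU n a b] at h
    rcases h with ⟨w, hw, hwu⟩
    rwa [← (Gyrogroup.gyr_bijective a b).injective hwu]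
  · rw [← hgyrU n a b]
    exact Set.mem_image_of_mem _ h

noncomputable def gyrEquiv (a b : G) : G ≃ G :=
  Equiv.ofBijective (gyr a b) (Gyrogroup.gyr_bijective a b)

theorem good_gyrinv {U : ℕ → Set G} (hgyrU : ∀ (n : ℕ) (x y : G), gyr x y '' (U n) = U n)
    (a b : G) : IsGood U (fun z => (gyrEquiv a b).symm z) := by
  have he : ∀ z : G, gyr a b ((gyrEquiv a b).symm z) = z := fun z =>
    (gyrEquiv a b).apply_symm_apply z
  constructor
  · intro u v
    apply (Gyrogroup.gyr_bijective a b).injective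
    rw [he, Gyrogroup.gyr_add, he, he]
  · intro n u
    constructor
    · intro h
      rw [← he u]
      exact ((good_gyr hgyrU a b).2 n _).mpr h
    · intro h
      have h2 := ((good_gyr hgyrU a b).2 n ((gyrEquiv a b).symm u))
      rw [he u] at h2
      exact h2.mp h

end BKaux
namespace BKaux

variable {G : Type u} [Gyrogroup G]

/-- Dyadic sets `Vd U n k` representing `k / 2 ^ n`. -/
def Vd (U : ℕ → Set G) : ℕ → ℕ → Set G
  | 0, k => if k = 0 then ({0} : Set G) else U 0
  | n + 1, k => if k % 2 = 0 then Vd U n (k / 2) else gadd (Vd U n (k / 2)) (U (n + 1))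

theorem Vd_zero_eq (U : ℕ → Set G) (k : ℕ) :
    Vd U 0 k = if k = 0 then ({0} : Set G) else U 0 := rfl

theorem Vd_succ_eq (U : ℕ → Set G) (n k : ℕ) :
    Vd U (n + 1) k = if k % 2 = 0 then Vd U n (k / 2) else gadd (Vd U n (k / 2)) (U (n + 1)) :=
  rfl

theorem Vd_k0 (U : ℕ → Set G) (n : ℕ) : Vd U n 0 = ({0} : Set G) := by
  induction n with
  | zero => simp [Vd_zero_eq]
  | succ n ih => rw [Vd_succ_eq]; simp [ih]

theorem Vd_even (U : ℕ → Set G) (n k : ℕ) : Vd U (n + 1) (2 * k) = Vd U n k := by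
  rw [Vd_succ_eq]
  have h1 : 2 * k % 2 = 0 := by omega
  have h2 : 2 * k / 2 = k := by omega
  simp [h1, h2]

theorem Vd_odd (U : ℕ → Set G) (n k : ℕ) :
    Vd U (n + 1) (2 * k + 1) = gadd (Vd U n k) (U (n + 1)) := by
  rw [Vd_succ_eq]
  have h1 : (2 * k + 1) % 2 = 1 := by omega
  have h2 : (2 * k + 1) / 2 = k := by omega
  simp [h1, h2]

theorem Vd_one (U : ℕ → Set G) (n : ℕ) : Vd U n 1 = U n := by
  cases n with
  | zero => simp [Vd_zero_eq]
  | succ n =>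
    have h := Vd_odd U n 0
    rw [Vd_k0] at h
    simpa [gadd_zero_left] using h

theorem Vd_gyrinv (U : ℕ → Set G) (hgyrU : ∀ (n : ℕ) (x y : G), gyr x y '' (U n) = U n)
    (n : ℕ) : ∀ (k : ℕ) (x y : G), gyr x y '' Vd U n k = Vd U n k := by
  induction n with
  | zero =>
    intro k x y
    rw [Vd_zero_eq]
    by_cases hk : k = 0
    · simp [hk, gg_gyr_zero]
    · simp [hk, hgyrU]
  | succ n ih =>
    intro k x y
    rw [Vd_succ_eq]
    by_cases hk : k % 2 = 0
    · simp only [hk, if_pos]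
      exact ih (k / 2) x y
    · simp only [hk, if_neg, ite_false]
      rw [image_gadd (Gyrogroup.gyr_add x y), ih (k / 2) x y, hgyrU]

theorem Vd_claim (U : ℕ → Set G) (hz : ∀ n, (0 : G) ∈ U n)
    (hsub : ∀ n, gadd (U (n + 1)) (U (n + 1)) ⊆ U n)
    (hgyrU : ∀ (n : ℕ) (x y : G), gyr x y '' (U n) = U n) :
    ∀ (n k : ℕ), k + 1 ≤ 2 ^ n → gadd (Vd U n k) (U n) ⊆ Vd U n (k + 1) := by
  intro n
  induction n with
  | zero =>
    intro k hk
    have hk0 : k = 0 := by simpa using hk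
    subst hk0
    rw [Vd_k0, gadd_zero_left, Vd_one]
  | succ n ih =>
    intro k hk
    rcases Nat.even_or_odd k with ⟨j, hj⟩ | ⟨j, hj⟩
    · have hj2 : k = 2 * j := by omega
      subst hj2
      rw [Vd_even, Vd_odd]
    · subst hj
      rw [Vd_odd]
      have h1 : gadd (gadd (Vd U n j) (U (n + 1))) (U (n + 1))
          = gadd (Vd U n j) (gadd (U (n + 1)) (U (n + 1))) :=
        gadd_assoc_of_inv (fun x y => hgyrU (n + 1) x y)
      rw [h1]
      have h2 : gadd (Vd U n j) (gadd (U (n + 1)) (U (n + 1))) ⊆ gadd (Vd U n j) (U n) :=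
        gadd_mono_right (hsub n)
      have h3 : gadd (Vd U n j) (U n) ⊆ Vd U n (j + 1) := ih j (by omega)
      have h4 : Vd U (n + 1) (2 * j + 1 + 1) = Vd U n (j + 1) := by
        have : 2 * j + 1 + 1 = 2 * (j + 1) := by omega
        rw [this, Vd_even]
      rw [h4]
      exact fun x hx => h3 (h2 hx)

theorem Vd_mono (U : ℕ → Set G) (hz : ∀ n, (0 : G) ∈ U n)
    (hsub : ∀ n, gadd (U (n + 1)) (U (n + 1)) ⊆ U n)
    (hgyrU : ∀ (n : ℕ) (x y : G), gyr x y '' (U n) = U n)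
    {n k l : ℕ} (hkl : k ≤ l) (hl : l ≤ 2 ^ n) : Vd U n k ⊆ Vd U n l := by
  induction l, hkl using Nat.le_induction with
  | base => exact fun x hx => hx
  | succ l hkl ih =>
    intro x hx
    have hx2 : x + 0 ∈ gadd (Vd U n l) (U n) := mem_gadd (ih (by omega) hx) (hz n)
    rw [Gyrogroup.add_zero] at hx2
    exact Vd_claim U hz hsub hgyrU n l (by omega) hx2

theorem Vd_collapse (U : ℕ → Set G) {m n : ℕ} (hm : m ≤ n) :
    Vd U n (2 ^ (n - m)) = U m := by
  induction n with
  | zero =>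
    have : m = 0 := by omega
    subst this
    simpa using Vd_one U 0
  | succ n ih =>
    rcases Nat.eq_or_lt_of_le hm with h | h
    · rw [← h]
      simpa using Vd_one U m
    · have hm' : m ≤ n := by omega
      have h1 : n + 1 - m = (n - m) + 1 := by omega
      rw [h1, pow_succ, mul_comm, Vd_even]
      exact ih hm'

theorem Vd_refine (U : ℕ → Set G) (n k : ℕ) :
    ∀ p : ℕ, Vd U n k = Vd U (n + p) (k * 2 ^ p) := by
  intro p
  induction p with
  | zero => simp
  | succ p ih =>
    have h1 : k * 2 ^ (p + 1) = 2 * (k * 2 ^ p) := by ring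
    have h2 : n + (p + 1) = (n + p) + 1 := by omega
    rw [h2, h1, Vd_even]
    exact ih

end BKaux
namespace BKaux

variable {G : Type u} [Gyrogroup G]

/-- Candidate values set for the auxiliary function `fBK`. -/
def Sf (U : ℕ → Set G) (u : G) : Set ℝ :=
  insert 1 {r | ∃ n k : ℕ, 1 ≤ k ∧ k < 2 ^ n ∧ u ∈ Vd U n k ∧ r = (k : ℝ) / 2 ^ n}

noncomputable def fBK (U : ℕ → Set G) (u : G) : ℝ := sInf (Sf U u)

theorem Sf_nonempty (U : ℕ → Set G) (u : G) : (Sf U u).Nonempty :=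
  ⟨1, Set.mem_insert 1 _⟩

theorem Sf_nonneg (U : ℕ → Set G) (u : G) {r : ℝ} (hr : r ∈ Sf U u) : 0 ≤ r := by
  rcases hr with h | ⟨n, k, _, _, _, rfl⟩
  · rw [h]; norm_num
  · positivity

theorem Sf_bdd (U : ℕ → Set G) (u : G) : BddBelow (Sf U u) :=
  ⟨0, fun r hr => Sf_nonneg U u hr⟩

theorem fBK_nonneg (U : ℕ → Set G) (u : G) : 0 ≤ fBK U u :=
  le_csInf (Sf_nonempty U u) (fun r hr => Sf_nonneg U u hr)

theorem fBK_le_one (U : ℕ → Set G) (u : G) : fBK U u ≤ 1 :=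
  csInf_le (Sf_bdd U u) (Set.mem_insert 1 _)

theorem fBK_le_of_mem (U : ℕ → Set G) {u : G} {n k : ℕ} (h : u ∈ Vd U n k)
    (h1 : 1 ≤ k) (h2 : k < 2 ^ n) : fBK U u ≤ (k : ℝ) / 2 ^ n :=
  csInf_le (Sf_bdd U u) (Set.mem_insert_iff.2 (Or.inr ⟨n, k, h1, h2, h, rfl⟩))

theorem fBK_zero (U : ℕ → Set G) (hz : ∀ n, (0 : G) ∈ U n) : fBK U 0 = 0 := by
  refine le_antisymm ?_ (fBK_nonneg U 0)
  by_contra hlt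
  push_neg at hlt
  obtain ⟨n, hn⟩ := exists_pow_lt_of_lt_one hlt (by norm_num : (1 : ℝ) / 2 < 1)
  have h1 : fBK U 0 ≤ (1 : ℝ) / 2 ^ n := by
    have h0 : (0 : G) ∈ Vd U (n + 1) 1 := by rw [Vd_one]; exact hz (n + 1)
    have := fBK_le_of_mem U h0 le_rfl (by simpa using Nat.one_lt_two_pow_iff.2 (by omega))
    refine le_trans this ?_
    rw [Nat.cast_one]
    apply div_le_div_of_nonneg_left (by norm_num) (by positivity)
    exact pow_le_pow_right₀ (by norm_num) (by omega)
  have h2 : (1 : ℝ) / 2 ^ n = (1 / 2 : ℝ) ^ n := by rw [div_pow, one_pow]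
  linarith [h1, hn, h2 ▸ h1]

theorem fBK_lower (U : ℕ → Set G) (hz : ∀ n, (0 : G) ∈ U n)
    (hsub : ∀ n, gadd (U (n + 1)) (U (n + 1)) ⊆ U n)
    (hgyrU : ∀ (n : ℕ) (x y : G), gyr x y '' (U n) = U n)
    {u : G} {m : ℕ} (h : fBK U u < 1 / 2 ^ m) : u ∈ U m := by
  obtain ⟨r, hr, hrlt⟩ := exists_lt_of_csInf_lt (Sf_nonempty U u) h
  rcases hr with h1 | ⟨n, k, hk1, hk2, hmem, rfl⟩
  · exfalso
    rw [h1] at hrlt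
    have : (1 : ℝ) / 2 ^ m ≤ 1 := by
      apply div_le_one_of_le₀
      · exact one_le_pow₀ (by norm_num : (1:ℝ) ≤ 2)
      · positivity
    linarith
  · have hcast : (k : ℝ) * 2 ^ m < 2 ^ n := by
      rw [div_lt_div_iff₀ (by positivity) (by positivity)] at hrlt
      linarith
    have hnat : k * 2 ^ m < 2 ^ n := by exact_mod_cast hcast
    have hmn : m ≤ n := by
      by_contra hc
      push_neg at hc
      have : 2 ^ n < 2 ^ m := Nat.pow_lt_pow_right (by omega) hc
      nlinarith [hk1]
    have hkle : k ≤ 2 ^ (n - m) := by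
      have h2 : 2 ^ n = 2 ^ (n - m) * 2 ^ m := by
        rw [← pow_add]; congr 1; omega
      rw [h2] at hnat
      have := Nat.lt_of_mul_lt_mul_right hnat
      omega
    have hsubV : Vd U n k ⊆ Vd U n (2 ^ (n - m)) :=
      Vd_mono U hz hsub hgyrU hkle (Nat.pow_le_pow_right (by omega) (by omega))
    rw [Vd_collapse U hmn] at hsubV
    exact hsubV hmem

end BKaux
namespace BKaux

variable {G : Type u} [Gyrogroup G]

theorem fBK_step (U : ℕ → Set G) (hz : ∀ n, (0 : G) ∈ U n)
    (hsub : ∀ n, gadd (U (n + 1)) (U (n + 1)) ⊆ U n)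
    (hgyrU : ∀ (n : ℕ) (x y : G), gyr x y '' (U n) = U n)
    (n : ℕ) (u z : G) (hzU : z ∈ U n) :
    fBK U (u + z) ≤ fBK U u + 2 / 2 ^ n := by
  have key : ∀ r ∈ Sf U u, fBK U (u + z) ≤ r + 2 / 2 ^ n := by
    intro r hr
    rcases hr with h1 | ⟨n', k, hk1, hk2, hmem, rfl⟩
    · rw [h1]
      have := fBK_le_one U (u + z)
      have hp : (0:ℝ) < 2 / 2 ^ n := by positivity
      linarith
    · -- refine to level N := max n n'
      set N := max n n' with hN
      set K := k * 2 ^ (N - n') with hK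
      have hVK : u ∈ Vd U N K := by
        have h := Vd_refine U n' k (N - n')
        have h2 : n' + (N - n') = N := by omega
        rw [h2] at h
        rw [← h]
        exact hmem
      have hKlt : K < 2 ^ N := by
        have h2 : (2:ℕ) ^ N = 2 ^ n' * 2 ^ (N - n') := by
          rw [← pow_add]; congr 1; omega
        rw [hK, h2]
        exact (Nat.mul_lt_mul_right (by positivity)).mpr hk2
      have hK1 : 1 ≤ K := by
        have : 0 < 2 ^ (N - n') := by positivity
        exact Nat.one_le_iff_ne_zero.2 (by positivity)
      have hrK : (k : ℝ) / 2 ^ n' = (K : ℝ) / 2 ^ N := by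
        have h2 : (2:ℝ) ^ N = 2 ^ n' * 2 ^ (N - n') := by
          rw [← pow_add]; congr 1; omega
        rw [hK]
        push_cast
        rw [h2]
        have hpos : (0:ℝ) < 2 ^ n' := by positivity
        have hpos2 : (0:ℝ) < 2 ^ (N - n') := by positivity
        field_simp
      set d := N - n with hd
      have hNd : N = n + d := by omega
      set q := K / 2 ^ d + 1 with hq
      have hdpos : 0 < 2 ^ d := Nat.pow_pos (by omega)
      have hKq : K < q * 2 ^ d := by
        have h1 := Nat.div_add_mod K (2 ^ d)
        have h2 : K % 2 ^ d < 2 ^ d := Nat.mod_lt K hdpos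
        have : q * 2 ^ d = 2 ^ d * (K / 2 ^ d) + 2 ^ d := by ring
        omega
      have hqle : q ≤ 2 ^ n := by
        have hlt : K < 2 ^ n * 2 ^ d := by
          have he : (2:ℕ) ^ n * 2 ^ d = 2 ^ N := by rw [← pow_add]; congr 1; omega
          rw [he]; exact hKlt
        have hdiv : K / 2 ^ d < 2 ^ n := (Nat.div_lt_iff_lt_mul hdpos).2 hlt
        omega
      have hVq : u ∈ Vd U n q := by
        have hsubs : Vd U N K ⊆ Vd U N (q * 2 ^ d) := by
          apply Vd_mono U hz hsub hgyrU (le_of_lt hKq)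
          calc q * 2 ^ d ≤ 2 ^ n * 2 ^ d := Nat.mul_le_mul_right _ hqle
          _ = 2 ^ N := by rw [← pow_add]; congr 1; omega
        have heq : Vd U n q = Vd U N (q * 2 ^ d) := by
          have := Vd_refine U n q d
          rw [← hNd] at this
          exact this
        rw [heq]
        exact hsubs hVK
      -- the real-number comparison
      have hcast : (q : ℝ) / 2 ^ n ≤ (K : ℝ) / 2 ^ N + 1 / 2 ^ n := by
        have hA : ((K / 2 ^ d : ℕ) : ℝ) ≤ (K : ℝ) / 2 ^ d := by
          have := Nat.cast_div_le (α := ℝ) (m := K) (n := 2 ^ d)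
          simpa using this
        have hq' : (q : ℝ) = ((K / 2 ^ d : ℕ) : ℝ) + 1 := by
          rw [hq]; push_cast; ring
        have h2N : (2:ℝ) ^ N = 2 ^ d * 2 ^ n := by
          rw [← pow_add]; congr 1; omega
        have hpn : (0:ℝ) < 2 ^ n := by positivity
        have hpd : (0:ℝ) < 2 ^ d := by positivity
        rw [hq', h2N]
        have hdd : ((K / 2 ^ d : ℕ) : ℝ) / 2 ^ n ≤ (K : ℝ) / 2 ^ d / 2 ^ n := by
          gcongr
        calc (((K / 2 ^ d : ℕ) : ℝ) + 1) / 2 ^ n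
            = ((K / 2 ^ d : ℕ) : ℝ) / 2 ^ n + 1 / 2 ^ n := by ring
        _ ≤ (K : ℝ) / 2 ^ d / 2 ^ n + 1 / 2 ^ n := by linarith [hdd]
        _ = (K : ℝ) / (2 ^ d * 2 ^ n) + 1 / 2 ^ n := by rw [div_div]
      rw [hrK]
      have hfinal : fBK U (u + z) ≤ ((q : ℝ) + 1) / 2 ^ n := by
        rcases Nat.eq_or_lt_of_le hqle with hq2 | hq2
        · -- q = 2 ^ n, trivial bound via f ≤ 1
          have h1 : ((q : ℝ) + 1) / 2 ^ n ≥ 1 := by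
            rw [hq2]
            rw [ge_iff_le, le_div_iff₀ (by positivity)]
            push_cast
            nlinarith [pow_pos (show (0:ℝ) < 2 by norm_num) n]
          linarith [fBK_le_one U (u + z)]
        · -- q < 2 ^ n : absorb
          have habs : u + z ∈ Vd U n (q + 1) :=
            Vd_claim U hz hsub hgyrU n q hq2 (mem_gadd hVq hzU)
          rcases Nat.eq_or_lt_of_le (show q + 1 ≤ 2 ^ n from hq2) with hq3 | hq3
          · have h1 : ((q : ℝ) + 1) / 2 ^ n = 1 := by
              have : ((q:ℝ) + 1) = 2 ^ n := by exact_mod_cast congrArg (Nat.cast (R := ℝ)) hq3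
              rw [this]
              field_simp
            rw [h1]
            exact fBK_le_one U (u + z)
          · have := fBK_le_of_mem U habs (Nat.le_add_left 1 q) hq3
            push_cast at this ⊢
            linarith
      have hstep : ((q : ℝ) + 1) / 2 ^ n = (q : ℝ) / 2 ^ n + 1 / 2 ^ n := by ring
      have h12 : (1:ℝ) / 2 ^ n + 1 / 2 ^ n = 2 / 2 ^ n := by ring
      linarith
  have hlow : fBK U (u + z) - 2 / 2 ^ n ≤ fBK U u :=
    le_csInf (Sf_nonempty U u) (fun r hr => by linarith [key r hr])
  linarith

theorem fBK_step' (U : ℕ → Set G) (hz : ∀ n, (0 : G) ∈ U n)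
    (hsub : ∀ n, gadd (U (n + 1)) (U (n + 1)) ⊆ U n)
    (hgyrU : ∀ (n : ℕ) (x y : G), gyr x y '' (U n) = U n)
    (hnegU : ∀ n, gneg (U n) = U n)
    (n : ℕ) (u z : G) (hzU : z ∈ U n) :
    fBK U u ≤ fBK U (u + z) + 2 / 2 ^ n := by
  have hneg : -z ∈ U n := by
    rw [← hnegU n]
    exact Set.mem_image_of_mem _ hzU
  have hgyrz : gyr u z (-z) ∈ U n := by
    rw [← hgyrU n u z]
    exact Set.mem_image_of_mem _ hneg
  have h := fBK_step U hz hsub hgyrU n (u + z) (gyr u z (-z)) hgyrz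
  rwa [gg_decomp] at h

end BKaux
namespace BKaux

variable {G : Type u} [Gyrogroup G]

/-- Term set for the prenorm. -/
def SFs (U : ℕ → Set G) (x : G) : Set ℝ :=
  {r | ∃ (v : G) (Φ : G → G), IsGood U Φ ∧ r = |fBK U (v + Φ x) - fBK U v|}

noncomputable def FBK (U : ℕ → Set G) (x : G) : ℝ := sSup (SFs U x)

theorem SFs_nonempty (U : ℕ → Set G) (x : G) : (SFs U x).Nonempty :=
  ⟨|fBK U ((0:G) + x) - fBK U 0|, 0, id, good_id U, rfl⟩

theorem SFs_bdd (U : ℕ → Set G) (x : G) : BddAbove (SFs U x) := by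
  refine ⟨1, fun r hr => ?_⟩
  rcases hr with ⟨v, Φ, hΦ, rfl⟩
  rw [abs_sub_le_iff]
  constructor
  · linarith [fBK_le_one U (v + Φ x), fBK_nonneg U v]
  · linarith [fBK_le_one U v, fBK_nonneg U (v + Φ x)]

theorem fBK_le_FBK (U : ℕ → Set G) (hz : ∀ n, (0 : G) ∈ U n) (x : G) :
    fBK U x ≤ FBK U x := by
  have hm : fBK U x ∈ SFs U x := by
    refine ⟨0, id, good_id U, ?_⟩
    rw [id_eq, Gyrogroup.zero_add, fBK_zero U hz, sub_zero, abs_of_nonneg (fBK_nonneg U x)]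
  exact le_csSup (SFs_bdd U x) hm

theorem FBK_nonneg (U : ℕ → Set G) (hz : ∀ n, (0 : G) ∈ U n) (x : G) :
    0 ≤ FBK U x := le_trans (fBK_nonneg U x) (fBK_le_FBK U hz x)

theorem FBK_zero (U : ℕ → Set G) (hz : ∀ n, (0 : G) ∈ U n) : FBK U 0 = 0 := by
  refine le_antisymm ?_ (FBK_nonneg U hz 0)
  apply csSup_le (SFs_nonempty U 0)
  rintro r ⟨v, Φ, hΦ, rfl⟩
  rw [gg_map_zero hΦ.1, Gyrogroup.add_zero, sub_self, abs_zero]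

theorem FBK_le_U (U : ℕ → Set G) (hz : ∀ n, (0 : G) ∈ U n)
    (hsub : ∀ n, gadd (U (n + 1)) (U (n + 1)) ⊆ U n)
    (hgyrU : ∀ (n : ℕ) (x y : G), gyr x y '' (U n) = U n)
    (hnegU : ∀ n, gneg (U n) = U n)
    {x : G} {n : ℕ} (hx : x ∈ U n) : FBK U x ≤ 2 / 2 ^ n := by
  apply csSup_le (SFs_nonempty U x)
  rintro r ⟨v, Φ, hΦ, rfl⟩
  have hΦx : Φ x ∈ U n := (hΦ.2 n x).mpr hx
  rw [abs_sub_le_iff]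
  constructor
  · linarith [fBK_step U hz hsub hgyrU n v (Φ x) hΦx]
  · linarith [fBK_step' U hz hsub hgyrU hnegU n v (Φ x) hΦx]

theorem FBK_lt_mem (U : ℕ → Set G) (hz : ∀ n, (0 : G) ∈ U n)
    (hsub : ∀ n, gadd (U (n + 1)) (U (n + 1)) ⊆ U n)
    (hgyrU : ∀ (n : ℕ) (x y : G), gyr x y '' (U n) = U n)
    {x : G} {n : ℕ} (hx : FBK U x < 1 / 2 ^ n) : x ∈ U n :=
  fBK_lower U hz hsub hgyrU (lt_of_le_of_lt (fBK_le_FBK U hz x) hx)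

theorem FBK_subadd (U : ℕ → Set G)
    (hgyrU : ∀ (n : ℕ) (x y : G), gyr x y '' (U n) = U n)
    (x y : G) : FBK U (x + y) ≤ FBK U x + FBK U y := by
  apply csSup_le (SFs_nonempty U (x + y))
  rintro r ⟨v, Φ, hΦ, rfl⟩
  have hgoodΨ : IsGood U (gyr v (Φ x) ∘ Φ) := good_comp (good_gyr hgyrU v (Φ x)) hΦ
  have hrw : v + Φ (x + y) = (v + Φ x) + (gyr v (Φ x) ∘ Φ) y := by
    rw [hΦ.1 x y, Gyrogroup.add_gyroassoc]; rfl
  have h1 : |fBK U ((v + Φ x) + (gyr v (Φ x) ∘ Φ) y) - fBK U (v + Φ x)| ≤ FBK U y :=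
    le_csSup (SFs_bdd U y) ⟨v + Φ x, gyr v (Φ x) ∘ Φ, hgoodΨ, rfl⟩
  have h2 : |fBK U (v + Φ x) - fBK U v| ≤ FBK U x :=
    le_csSup (SFs_bdd U x) ⟨v, Φ, hΦ, rfl⟩
  calc |fBK U (v + Φ (x + y)) - fBK U v|
      ≤ |fBK U (v + Φ (x + y)) - fBK U (v + Φ x)| + |fBK U (v + Φ x) - fBK U v| :=
        abs_sub_le _ _ _
  _ ≤ FBK U y + FBK U x := by
      rw [hrw]
      exact add_le_add h1 h2
  _ = FBK U x + FBK U y := by ring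

theorem FBK_neg_le (U : ℕ → Set G)
    (hgyrU : ∀ (n : ℕ) (x y : G), gyr x y '' (U n) = U n)
    (x : G) : FBK U (-x) ≤ FBK U x := by
  apply csSup_le (SFs_nonempty U (-x))
  rintro r ⟨v, Φ, hΦ, rfl⟩
  have hneg : Φ (-x) = -(Φ x) := gg_map_neg hΦ.1 x
  set w := v + -(Φ x) with hw
  have hgoodΨ : IsGood U (gyr v (-(Φ x)) ∘ Φ) := good_comp (good_gyr hgyrU v (-(Φ x))) hΦ
  have hv : v = w + (gyr v (-(Φ x)) ∘ Φ) x := by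
    have h := gg_decomp v (-(Φ x))
    rw [gg_neg_neg] at h
    exact h.symm
  have hmem : |fBK U (w + (gyr v (-(Φ x)) ∘ Φ) x) - fBK U w| ≤ FBK U x :=
    le_csSup (SFs_bdd U x) ⟨w, gyr v (-(Φ x)) ∘ Φ, hgoodΨ, rfl⟩
  calc |fBK U (v + Φ (-x)) - fBK U v|
      = |fBK U w - fBK U (w + (gyr v (-(Φ x)) ∘ Φ) x)| := by
        rw [hneg, ← hw, ← hv]
  _ = |fBK U (w + (gyr v (-(Φ x)) ∘ Φ) x) - fBK U w| := abs_sub_comm _ _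
  _ ≤ FBK U x := hmem

theorem FBK_neg (U : ℕ → Set G)
    (hgyrU : ∀ (n : ℕ) (x y : G), gyr x y '' (U n) = U n)
    (x : G) : FBK U (-x) = FBK U x := by
  refine le_antisymm (FBK_neg_le U hgyrU x) ?_
  have h := FBK_neg_le U hgyrU (-x)
  rwa [gg_neg_neg] at h

theorem FBK_gyr (U : ℕ → Set G)
    (hgyrU : ∀ (n : ℕ) (x y : G), gyr x y '' (U n) = U n)
    (a b z : G) : FBK U (gyr a b z) = FBK U z := by
  apply le_antisymm
  · apply csSup_le (SFs_nonempty U (gyr a b z))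
    rintro r ⟨v, Φ, hΦ, rfl⟩
    exact le_csSup (SFs_bdd U z) ⟨v, Φ ∘ gyr a b, good_comp hΦ (good_gyr hgyrU a b), rfl⟩
  · apply csSup_le (SFs_nonempty U z)
    rintro r ⟨v, Φ, hΦ, rfl⟩
    have hgood : IsGood U (Φ ∘ fun t => (gyrEquiv a b).symm t) :=
      good_comp hΦ (good_gyrinv hgyrU a b)
    have hx : (Φ ∘ fun t => (gyrEquiv a b).symm t) (gyr a b z) = Φ z := by
      simp only [Function.comp_apply]
      congr 1
      exact (gyrEquiv a b).symm_apply_apply z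
    refine le_csSup (SFs_bdd U (gyr a b z)) ⟨v, Φ ∘ fun t => (gyrEquiv a b).symm t, hgood, ?_⟩
    rw [hx]

end BKaux
theorem stmt16 {G : Type u} [TopologicalSpace G] [Gyrogroup G] [TopologicalGyrogroup G]
    (𝒰 : Set (Set G)) (hnbhd : ∀ U ∈ 𝒰, U ∈ nhds (0 : G))
    (hbase : ∀ W ∈ nhds (0 : G), ∃ U ∈ 𝒰, U ⊆ W)
    (hsym : ∀ U ∈ 𝒰, gneg U = U)
    (hgyr : ∀ U ∈ 𝒰, ∀ x y : G, gyr x y '' U = U)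
    (U : ℕ → Set G) (hU : ∀ n, U n ∈ 𝒰)
    (hUsub : ∀ n, gadd (U (n + 1)) (U (n + 1)) ⊆ U n) :
    ∃ N : G → ℝ, Continuous N ∧ N 0 = 0 ∧
      (∀ x y : G, N (x + y) ≤ N x + N y) ∧ (∀ x : G, N (-x) = N x) ∧
      (∀ x y z : G, N (gyr x y z) = N z) ∧
      (∀ n : ℕ, {x : G | N x < 1 / 2 ^ n} ⊆ U n ∧ U n ⊆ {x : G | N x ≤ 2 / 2 ^ n}) := by
  have hz : ∀ n, (0 : G) ∈ U n := fun n => mem_of_mem_nhds (hnbhd _ (hU n))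
  have hgyrU : ∀ (n : ℕ) (x y : G), gyr x y '' (U n) = U n := fun n x y => hgyr _ (hU n) x y
  have hnegU : ∀ n, gneg (U n) = U n := fun n => hsym _ (hU n)
  refine ⟨BKaux.FBK U, ?_, BKaux.FBK_zero U hz, BKaux.FBK_subadd U hgyrU,
    BKaux.FBK_neg U hgyrU, fun x y z => BKaux.FBK_gyr U hgyrU x y z, fun n => ⟨?_, ?_⟩⟩
  · -- continuity
    rw [continuous_iff_continuousAt]
    intro x₀
    rw [ContinuousAt, Metric.tendsto_nhds]
    intro ε hε
    obtain ⟨n, hn⟩ := exists_pow_lt_of_lt_one (half_pos hε) (by norm_num : (1:ℝ)/2 < 1)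
    have h2n : 2 / 2 ^ n < ε := by
      have : ((1:ℝ)/2) ^ n = 1 / 2 ^ n := by rw [div_pow, one_pow]
      rw [this] at hn
      rw [div_lt_iff₀ (by positivity : (0:ℝ) < 2 ^ n)] at hn ⊢
      linarith
    have hc1 : Continuous fun x : G => -x₀ + x :=
      TopologicalGyrogroup.continuous_add.comp (continuous_const.prodMk continuous_id)
    have hc2 : Continuous fun x : G => -x + x₀ :=
      TopologicalGyrogroup.continuous_add.comp
        (TopologicalGyrogroup.continuous_neg.prodMk continuous_const)
    have hm1 : (fun x : G => -x₀ + x) ⁻¹' (U n) ∈ nhds x₀ := by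
      apply hc1.continuousAt.preimage_mem_nhds
      have : -x₀ + x₀ = (0 : G) := Gyrogroup.neg_add x₀
      rw [this]
      exact hnbhd _ (hU n)
    have hm2 : (fun x : G => -x + x₀) ⁻¹' (U n) ∈ nhds x₀ := by
      apply hc2.continuousAt.preimage_mem_nhds
      have : -x₀ + x₀ = (0 : G) := Gyrogroup.neg_add x₀
      rw [this]
      exact hnbhd _ (hU n)
    filter_upwards [hm1, hm2] with x h1 h2
    have hb1 : BKaux.FBK U (-x₀ + x) ≤ 2 / 2 ^ n := BKaux.FBK_le_U U hz hUsub hgyrU hnegU h1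
    have hb2 : BKaux.FBK U (-x + x₀) ≤ 2 / 2 ^ n := BKaux.FBK_le_U U hz hUsub hgyrU hnegU h2
    have hx1 : BKaux.FBK U x ≤ BKaux.FBK U x₀ + BKaux.FBK U (-x₀ + x) := by
      have h := BKaux.FBK_subadd U hgyrU x₀ (-x₀ + x)
      rwa [BKaux.gg_add_neg_cancel_left] at h
    have hx2 : BKaux.FBK U x₀ ≤ BKaux.FBK U x + BKaux.FBK U (-x + x₀) := by
      have h := BKaux.FBK_subadd U hgyrU x (-x + x₀)
      rwa [BKaux.gg_add_neg_cancel_left] at h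
    rw [Real.dist_eq, abs_sub_lt_iff]
    constructor <;> linarith
  · intro x hx
    exact BKaux.FBK_lt_mem U hz hUsub hgyrU hx
  · intro x hx
    exact BKaux.FBK_le_U U hz hUsub hgyrU hnegU hx
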